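/- Let 0 < ε ≤ 0.5 and μ̄ = 0.5 - ε. Suppose H is the symmetric 4×4 matrix with nonzero entries only h13, h14, h23, h24 (and their transposes) satisfying: h13 < 0; h14 = -C2(h13 - h23)/(2C1); h23 < (L2/L1)·((1-ε)/ε)·h13 < 0; and h24 > C2·((h23 - h13)²μ̄² + h13 h23)/(-4 h13 ε C1) > 0. Then for every μ ∈ [-μ̄, μ̄], the 3×3 matrix X(A(μ)) = S_Qᵀ(A(μ)ᵀH + H A(μ))S_Q with S_Q = [e1, e2, e3] is negative definite. -/

import Mathlib

open Matrix

lemma posdef_aux (a b c d : ℝ) (ha : 0 < a) (hd : 0 < d) (hdet : b^2 < a*c) :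
    (!![a,b,0;b,c,0;0,0,d]).PosDef := by
  have hc : 0 < c := by nlinarith [sq_nonneg b]
  rw [Matrix.posDef_iff_dotProduct_mulVec]
  constructor
  · ext i j
    fin_cases i <;> fin_cases j <;> simp [Matrix.conjTranspose_apply]
  · intro x hx
    have hq : (star x ⬝ᵥ (!![a,b,0;b,c,0;0,0,d]) *ᵥ x) =
        a*(x 0)^2 + 2*b*(x 0)*(x 1) + c*(x 1)^2 + d*(x 2)^2 := by
      simp [dotProduct, Matrix.mulVec, Fin.sum_univ_succ]
      ring
    rw [hq]
    obtain ⟨i, hi⟩ := Function.ne_iff.mp hx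
    fin_cases i
    · have h2 : x 0 ≠ 0 := by simpa using hi
      have hp : 0 < (x 0)^2 := by positivity
      nlinarith [sq_nonneg (c*(x 1)+b*(x 0)), mul_pos (sub_pos.2 hdet) hp,
        mul_nonneg (mul_pos hc hd).le (sq_nonneg (x 2))]
    · have h2 : x 1 ≠ 0 := by simpa using hi
      have hp : 0 < (x 1)^2 := by positivity
      nlinarith [sq_nonneg (a*(x 0)+b*(x 1)), mul_pos (sub_pos.2 hdet) hp,
        mul_nonneg (mul_pos ha hd).le (sq_nonneg (x 2))]
    · have h2 : x 2 ≠ 0 := by simpa using hi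
      have hp : 0 < (x 2)^2 := by positivity
      nlinarith [sq_nonneg (a*(x 0)+b*(x 1)), mul_nonneg (sub_pos.2 hdet).le (sq_nonneg (x 1)),
        mul_pos hd hp]

set_option maxHeartbeats 4000000

/-- under the stated sign conditions on the entries of H,
X(A(μ)) = S_Qᵀ(A(μ)ᵀH + HA(μ))S_Q is negative definite for all μ ∈ [-μ̄, μ̄]. -/
theorem X_negative_definite
    (L1 L2 C1 C2 R : ℝ) (hL1 : 0 < L1) (hL2 : 0 < L2) (hC1 : 0 < C1)
    (hC2 : 0 < C2) (hR : 0 < R)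
    (P : Matrix (Fin 4) (Fin 4) ℝ) (hP : P = (1/2 : ℝ) • Matrix.diagonal ![L1, L2, C1, C2])
    (A0q E0q : Matrix (Fin 4) (Fin 4) ℝ)
    (hA0q : A0q = !![0,0,-1/2,0; 0,0,1/2,1; 1/2,-1/2,0,0; 0,-1,0,-1/R])
    (hE0q : E0q = !![0,0,1,0; 0,0,1,0; -1,-1,0,0; 0,0,0,0])
    (A : ℝ → Matrix (Fin 4) (Fin 4) ℝ)
    (hA : ∀ μ, A μ = (1/2 : ℝ) • (P⁻¹ * (A0q + μ • E0q)))
    (ε : ℝ) (hε : 0 < ε ∧ ε ≤ 0.5)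
    (μbar : ℝ) (hμbar : μbar = 0.5 - ε)
    (h13 h14 h23 h24 : ℝ)
    (hh13 : h13 < 0)
    (hh14 : h14 = -(C2 * (h13 - h23)) / (2 * C1))
    (hh23 : h23 < (L2 / L1) * ((1 - ε) / ε) * h13 ∧ (L2 / L1) * ((1 - ε) / ε) * h13 < 0)
    (hh24 : h24 > (C2 / C1) * (((h23 - h13)^2 * μbar^2 + h13 * h23) / (-h13 * 4 * ε)) ∧
            (C2 / C1) * (((h23 - h13)^2 * μbar^2 + h13 * h23) / (-h13 * 4 * ε)) > 0)
    (H : Matrix (Fin 4) (Fin 4) ℝ)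
    (hH : H = !![0,0,h13,h14; 0,0,h23,h24; h13,h23,0,0; h14,h24,0,0])
    (SQ : Matrix (Fin 4) (Fin 3) ℝ)
    (hSQ : SQ = Matrix.of fun (i : Fin 4) (j : Fin 3) => if (i : ℕ) = (j : ℕ) then (1:ℝ) else 0) :
    ∀ μ ∈ Set.Icc (-μbar) μbar,
      (-(SQᵀ * ((A μ)ᵀ * H + H * A μ) * SQ)).PosDef := by
  obtain ⟨hε1, hε2⟩ := hε
  have hε2' : ε ≤ 1/2 := by norm_num at hε2; linarith
  have hμb : μbar = 1/2 - ε := by rw [hμbar]; norm_num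
  have hL1' := hL1.ne'
  have hL2' := hL2.ne'
  have hC1' := hC1.ne'
  have hC2' := hC2.ne'
  have hR' := hR.ne'
  -- inverse of P
  have hPinv : P⁻¹ = !![2/L1,0,0,0; 0,2/L2,0,0; 0,0,2/C1,0; 0,0,0,2/C2] := by
    apply Matrix.inv_eq_right_inv
    subst hP
    ext i j
    fin_cases i <;> fin_cases j <;>
      simp [Matrix.mul_apply, Fin.sum_univ_succ, Matrix.diagonal, Matrix.one_apply,
        Matrix.vecHead, Matrix.vecTail] <;>
      field_simp
  intro μ hμ
  obtain ⟨hμ1, hμ2⟩ := hμ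
  have hm1 : ε ≤ 1/2 - μ := by rw [hμb] at hμ2; linarith
  have hm2 : ε ≤ 1/2 + μ := by rw [hμb] at hμ1; linarith
  -- explicit A μ
  have hAE : A μ = !![0,0,(μ-1/2)/L1,0; 0,0,(μ+1/2)/L2,1/L2;
      (1/2-μ)/C1,(-1/2-μ)/C1,0,0; 0,-1/C2,0,-1/(R*C2)] := by
    rw [hA, hPinv, hA0q, hE0q]
    ext i j
    fin_cases i <;> fin_cases j <;>
      (simp [Matrix.mul_apply, Fin.sum_univ_succ, Matrix.vecHead, Matrix.vecTail];
       try field_simp; try ring)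
  -- the reduced 3×3 matrix
  have hN : -(SQᵀ * ((A μ)ᵀ * H + H * A μ) * SQ) =
      !![2*h13*(μ-1/2)/C1, μ*(h13+h23)/C1, 0;
         μ*(h13+h23)/C1, 2*(h23*(1/2+μ)/C1 + h24/C2), 0;
         0, 0, 2*(h13*(1/2-μ)/L1 - h23*(μ+1/2)/L2)] := by
    subst hh14 hH hSQ
    rw [hAE]
    ext i j
    fin_cases i <;> fin_cases j <;>
      (simp [Matrix.mul_apply, Fin.sum_univ_succ, Matrix.vecHead, Matrix.vecTail];
       try field_simp; try ring)
  rw [hN]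
  apply posdef_aux
  -- a > 0
  · apply div_pos ?_ hC1
    nlinarith
  -- d > 0
  · have k1 : h23 * (L1*ε) < L2*(1-ε)*h13 := by
      have e : (L2 / L1) * ((1 - ε) / ε) * h13 = (L2*(1-ε)*h13)/(L1*ε) := by
        field_simp; try ring
      rw [e] at hh23
      exact (lt_div_iff₀ (mul_pos hL1 hε1)).mp hh23.1
    have k2 : h23*(L1*ε)*(μ+1/2) < L2*(1-ε)*h13*(μ+1/2) :=
      mul_lt_mul_of_pos_right k1 (by linarith)
    have k3 : L2*(1-ε)*h13*(μ+1/2) ≤ L2*(1-ε)*h13*ε := by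
      have : h13*(μ+1/2) ≤ h13*ε := by nlinarith
      have hL2e : (0:ℝ) ≤ L2*(1-ε) := by nlinarith
      nlinarith
    have k4 : L2*(1-ε)*h13*ε ≤ L2*(1/2-μ)*h13*ε := by
      have : (1/2 - μ) ≤ 1 - ε := by linarith
      nlinarith [mul_pos hL2 hε1]
    have key : 0 < h13*(1/2-μ)*L2 - h23*(μ+1/2)*L1 := by
      have h5 : h23*(L1*ε)*(μ+1/2) < L2*(1/2-μ)*h13*ε := by linarith
      nlinarith [h5]
    have e : 2*(h13*(1/2-μ)/L1 - h23*(μ+1/2)/L2)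
        = 2*((h13*(1/2-μ)*L2 - h23*(μ+1/2)*L1)/(L1*L2)) := by
      field_simp
    rw [e]
    have := div_pos key (mul_pos hL1 hL2)
    linarith
  -- determinant condition
  · have hμsq : μ^2 ≤ μbar^2 := by nlinarith [mul_nonneg (sub_nonneg.2 hμ2) (by linarith : 0 ≤ μbar + μ)]
    set N := (h23 - h13)^2 * μbar^2 + h13 * h23 with hNdef
    have hden : (0:ℝ) < -h13 * 4 * ε := by nlinarith
    have eN : (C2 / C1) * (N / (-h13 * 4 * ε)) = (C2*N)/(C1*(-h13*4*ε)) := by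
      field_simp; try ring
    have key24 : C2*N < h24 * (C1*(-h13*4*ε)) := by
      have h := hh24.1
      rw [gt_iff_lt, eN, div_lt_iff₀ (mul_pos hC1 hden)] at h
      exact h
    have hNpos : 0 < N := by
      have h := hh24.2
      rw [gt_iff_lt, eN] at h
      have := (div_pos_iff.mp h)
      rcases this with ⟨hn, _⟩ | ⟨_, hd2⟩
      · nlinarith [mul_pos hC1 hden]
      · nlinarith [mul_pos hC1 hden]
    have h24pos : 0 < h24 := by nlinarith [mul_pos hC2 hNpos, mul_pos hC1 hden]
    have t1 : C2*(μ^2*(h23-h13)^2) ≤ C2*(μbar^2*(h23-h13)^2) :=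
      mul_le_mul_of_nonneg_left (mul_le_mul_of_nonneg_right hμsq (sq_nonneg _)) hC2.le
    have t2 : h24*(C1*(-h13*4*ε)) ≤ h24*(C1*(-h13*4*(1/2-μ))) := by
      have : (0:ℝ) < h24*(C1*(-h13*4)) := by nlinarith
      nlinarith
    -- polynomial inequality
    rw [hNdef] at key24
    have T : μ^2*(h13+h23)^2*C2 < 4*h13*(μ-1/2)*(h23*(1/2+μ)*C2 + h24*C1) := by
      linarith [t1, t2, key24]
    have e2 : 2*h13*(μ-1/2)/C1 * (2*(h23*(1/2+μ)/C1 + h24/C2)) - (μ*(h13+h23)/C1)^2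
        = (4*h13*(μ-1/2)*(h23*(1/2+μ)*C2 + h24*C1) - μ^2*(h13+h23)^2*C2)/(C1^2*C2) := by
      field_simp; ring
    have : 0 < (4*h13*(μ-1/2)*(h23*(1/2+μ)*C2 + h24*C1) - μ^2*(h13+h23)^2*C2)/(C1^2*C2) :=
      div_pos (by linarith) (by positivity)
    linarith [e2, this]
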